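/- Let n ≥ 1, let K ⊆ {1,…,2n} be a properly admissible subset with |K| = t (so necessarily t ≤ n), and let f : {1,…,t} → {1,…,2n} be an injective map with image K. Then there exists a permutation τ of {1,…,2n} commuting with the bar involution such that τ(j) = f(j) for all j ∈ {1,…,t}. -/

import Mathlib

theorem stmt12 (n t : ℕ) (hn : 1 ≤ n) (K : Finset (Fin (2 * n)))
    (hK : ∀ i ∈ K, i.rev ∉ K) (hcard : K.card = t)
    (f : Fin t → Fin (2 * n)) (hf : Function.Injective f)
    (him : Finset.univ.image f = K) :
    ∃ τ : Equiv.Perm (Fin (2 * n)),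
      (∀ i, τ i.rev = (τ i).rev) ∧
        ∀ (x : Fin (2 * n)) (j : Fin t), (x : ℕ) = (j : ℕ) → τ x = f j := by
  classical
  have hfK : ∀ j, f j ∈ K := by
    intro j; rw [← him]; exact Finset.mem_image_of_mem f (Finset.mem_univ j)
  set KR : Finset (Fin (2*n)) := K.image Fin.rev with hKRdef
  have hmemKR : ∀ a, a ∈ KR ↔ a.rev ∈ K := by
    intro a
    constructor
    · intro h
      obtain ⟨b, hb, hba⟩ := Finset.mem_image.mp h
      rw [← hba, Fin.rev_rev]; exact hb
    · intro h
      exact Finset.mem_image.mpr ⟨a.rev, h, Fin.rev_rev a⟩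
  have hdisj : Disjoint K KR := by
    rw [Finset.disjoint_left]
    intro a haK haKR
    exact hK a haK ((hmemKR a).mp haKR)
  have hKRcard : KR.card = t := by
    rw [hKRdef, Finset.card_image_of_injective _ Fin.rev_injective, hcard]
  set T : Finset (Fin (2*n)) := (K ∪ KR)ᶜ with hTdef
  have hTcard : T.card = 2*n - 2*t := by
    rw [hTdef, Finset.card_compl, Finset.card_union_of_disjoint hdisj, hcard, hKRcard]
    simp [Fintype.card_fin]; omega
  have hmemT : ∀ a, a ∈ T ↔ (a ∉ K ∧ a ∉ KR) := by
    intro a; simp [hTdef, Finset.mem_compl, Finset.mem_union, not_or]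
  have hTrev : ∀ a, a ∈ T → a.rev ∈ T := by
    intro a ha
    rw [hmemT] at ha ⊢
    refine ⟨fun h => ha.2 ((hmemKR a).mpr h), fun h => ha.1 ?_⟩
    rw [hmemKR, Fin.rev_rev] at h; exact h
  set T' : Finset (Fin (2*n)) := T.filter (fun x => (x : ℕ) < n) with hT'def
  set T'' : Finset (Fin (2*n)) := T.filter (fun x => ¬ (x : ℕ) < n) with hT''def
  have hrevval : ∀ a : Fin (2*n), (a.rev : ℕ) = 2*n - (a+1) := fun a => Fin.val_rev a
  have hcard12 : T'.card = T''.card := by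
    apply Finset.card_nbij' (fun a => a.rev) (fun a => a.rev)
    · intro a ha
      simp only [Finset.mem_coe, hT'def, Finset.mem_filter] at ha
      rw [Finset.mem_coe, hT''def, Finset.mem_filter]
      refine ⟨hTrev a ha.1, ?_⟩
      have := hrevval a; have := a.isLt; beta_reduce; omega
    · intro a ha
      simp only [Finset.mem_coe, hT''def, Finset.mem_filter] at ha
      rw [Finset.mem_coe, hT'def, Finset.mem_filter]
      refine ⟨hTrev a ha.1, ?_⟩
      have := hrevval a; have := a.isLt; beta_reduce; omega
    · intro a _; exact Fin.rev_rev a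
    · intro a _; exact Fin.rev_rev a
  have hsum : T'.card + T''.card = T.card := by
    rw [hT'def, hT''def]; exact Finset.card_filter_add_card_filter_not _
  have htn : t ≤ n := by
    have h2 : (K ∪ KR).card ≤ Fintype.card (Fin (2*n)) := Finset.card_le_univ _
    rw [Finset.card_union_of_disjoint hdisj, hcard, hKRcard, Fintype.card_fin] at h2
    omega
  have hT'card : T'.card = n - t := by omega
  set h : Fin (n - t) ≃ T' := (Finset.equivFinOfCardEq hT'card).symm with hhdef
  -- the lower-half map
  set g0 : Fin (2*n) → Fin (2*n) := fun x =>
    if hx : (x : ℕ) < t then f ⟨x, hx⟩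
    else if hx2 : (x : ℕ) < n then (h ⟨(x : ℕ) - t, by omega⟩ : Fin (2*n))
    else x with hg0def
  set S : Finset (Fin (2*n)) := K ∪ T' with hSdef
  have hg0mem : ∀ x : Fin (2*n), (x : ℕ) < n → g0 x ∈ S := by
    intro x hx
    rw [hg0def, hSdef]
    by_cases h1 : (x : ℕ) < t
    · simp only [h1, dif_pos]
      exact Finset.mem_union_left _ (hfK _)
    · simp only [h1, dif_neg, not_false_iff, hx, dif_pos]
      exact Finset.mem_union_right _ (h ⟨(x:ℕ) - t, by omega⟩).2
  have hT'subT : ∀ a, a ∈ T' → a ∈ T ∧ (a : ℕ) < n := by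
    intro a ha; rw [hT'def, Finset.mem_filter] at ha; exact ha
  -- S contains no pair {s, s.rev}
  have hSrev : ∀ s, s ∈ S → s.rev ∉ S := by
    intro s hs hrs
    rw [hSdef, Finset.mem_union] at hs hrs
    rcases hs with hs | hs
    · rcases hrs with hrs | hrs
      · exact hK s hs hrs
      · have := (hT'subT _ hrs).1
        rw [hmemT] at this
        exact this.2 ((hmemKR _).mpr (by rwa [Fin.rev_rev]))
    · obtain ⟨hsT, hsn⟩ := hT'subT _ hs
      rcases hrs with hrs | hrs
      · have := hTrev s hsT
        rw [hmemT] at this; exact this.1 hrs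
      · have := (hT'subT _ hrs).2
        have := hrevval s; have := s.isLt; omega
  -- g0 injective on the lower half
  have hg0inj : ∀ x y : Fin (2*n), (x : ℕ) < n → (y : ℕ) < n → g0 x = g0 y → x = y := by
    intro x y hx hy hxy
    rw [hg0def] at hxy
    simp only at hxy
    by_cases h1 : (x : ℕ) < t <;> by_cases h2 : (y : ℕ) < t
    · rw [dif_pos h1, dif_pos h2] at hxy
      have hv : (x:ℕ) = (y:ℕ) := by
        have := hf hxy; simpa [Fin.ext_iff] using this
      exact Fin.ext hv
    · rw [dif_pos h1, dif_neg h2, dif_pos hy] at hxy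
      exfalso
      have h3 : f ⟨(x:ℕ), h1⟩ ∈ K := hfK _
      have h4 := (hT'subT _ (h ⟨(y:ℕ) - t, by omega⟩).2).1
      rw [hmemT] at h4
      rw [hxy] at h3; exact h4.1 h3
    · rw [dif_neg h1, dif_pos hx, dif_pos h2] at hxy
      exfalso
      have h3 : f ⟨(y:ℕ), h2⟩ ∈ K := hfK _
      have h4 := (hT'subT _ (h ⟨(x:ℕ) - t, by omega⟩).2).1
      rw [hmemT] at h4
      rw [← hxy] at h3; exact h4.1 h3
    · rw [dif_neg h1, dif_pos hx, dif_neg h2, dif_pos hy] at hxy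
      have hv : (x:ℕ) - t = (y:ℕ) - t := by
        have := h.injective (Subtype.ext hxy); simpa [Fin.ext_iff] using this
      apply Fin.ext; omega
  -- full map
  set g : Fin (2*n) → Fin (2*n) := fun x =>
    if (x : ℕ) < n then g0 x else (g0 x.rev).rev with hgdef
  have hrevlt : ∀ x : Fin (2*n), (x : ℕ) < n ↔ ¬ ((x.rev : ℕ) < n) := by
    intro x; have := hrevval x; have := x.isLt; omega
  have hginj : Function.Injective g := by
    intro x y hxy
    rw [hgdef] at hxy; simp only at hxy
    by_cases h1 : (x : ℕ) < n <;> by_cases h2 : (y : ℕ) < n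
    · rw [if_pos h1, if_pos h2] at hxy; exact hg0inj x y h1 h2 hxy
    · rw [if_pos h1, if_neg h2] at hxy
      exfalso
      have hy' : ((y.rev : ℕ)) < n := by have := hrevval y; have := y.isLt; omega
      have hm1 := hg0mem x h1
      have hm2 := hg0mem y.rev hy'
      rw [hxy] at hm1
      exact hSrev _ hm2 hm1
    · rw [if_neg h1, if_pos h2] at hxy
      exfalso
      have hx' : ((x.rev : ℕ)) < n := by have := hrevval x; have := x.isLt; omega
      have hm1 := hg0mem y h2
      have hm2 := hg0mem x.rev hx'
      rw [← hxy] at hm1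
      exact hSrev _ hm2 hm1
    · rw [if_neg h1, if_neg h2] at hxy
      have hx' : ((x.rev : ℕ)) < n := by have := hrevval x; have := x.isLt; omega
      have hy' : ((y.rev : ℕ)) < n := by have := hrevval y; have := y.isLt; omega
      have := hg0inj x.rev y.rev hx' hy' (Fin.rev_injective hxy)
      exact Fin.rev_injective this
  have hgbij : Function.Bijective g := Finite.injective_iff_bijective.mp hginj
  refine ⟨Equiv.ofBijective g hgbij, ?_, ?_⟩
  · intro i
    show g i.rev = (g i).rev
    rw [hgdef]; simp only
    by_cases h1 : (i : ℕ) < n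
    · have h2 : ¬ ((i.rev : ℕ) < n) := (hrevlt i).mp h1
      rw [if_neg h2, if_pos h1, Fin.rev_rev]
    · have h2 : ((i.rev : ℕ) < n) := by have := hrevval i; have := i.isLt; omega
      rw [if_pos h2, if_neg h1, Fin.rev_rev]
  · intro x j hxj
    show g x = f j
    have hjt : (j : ℕ) < t := j.isLt
    have hxn : (x : ℕ) < n := by omega
    rw [hgdef]; simp only
    rw [if_pos hxn, hg0def]; simp only
    rw [dif_pos (show (x : ℕ) < t by omega)]
    congr 1
    exact Fin.ext (by simp [hxj])
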